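/- Let 1 ≤ k ≤ n and let q be a prime power with q > C(n−1, k−1). Let M be a k × n binary matrix in which every row has weight n − k + 1 and which satisfies: for every nonempty I ⊆ [k], |∪_{i∈I} R_i| ≥ n − k + |I|. Then there exists a k × n matrix G over F_q whose support equals M (i.e., G(i,j) ≠ 0 iff M(i,j) = 1) and such that every k × k submatrix of G is invertible (so G generates an [n,k] MDS code). -/

import Mathlib

/-- Support of row `i` of a binary matrix. -/
def rowSupp {k n : ℕ} (M : Fin k → Fin n → Bool) (i : Fin k) : Finset (Fin n) :=
  Finset.univ.filter (fun j => M i j = true)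

/-- Support of column `j` of a binary matrix. -/
def colSupp {k n : ℕ} (M : Fin k → Fin n → Bool) (j : Fin n) : Finset (Fin k) :=
  Finset.univ.filter (fun i => M i j = true)

/-- Weight (number of ones) of column `j`. -/
def colW {k n : ℕ} (M : Fin k → Fin n → Bool) (j : Fin n) : ℕ :=
  (colSupp M j).card

/-- Condition (P3): every nonempty set `I` of rows has union of supports of size
at least `n - k + |I|`. -/
def P3 {k n : ℕ} (M : Fin k → Fin n → Bool) : Prop :=
  ∀ I : Finset (Fin k), I.Nonempty → n - k + I.card ≤ (I.biUnion (rowSupp M)).card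

/-- The matrix obtained from `M` by swapping the entries `(i, jmax)` and `(i, jmin)`
of row `i` (setting the former to `0` and the latter to `1`). -/
def swapEntries {k n : ℕ} (M : Fin k → Fin n → Bool) (i : Fin k) (jmax jmin : Fin n) :
    Fin k → Fin n → Bool :=
  fun r c => if r = i then (if c = jmax then false else if c = jmin then true else M r c)
             else M r c

open Finset MvPolynomial

section Aux

variable {k n : ℕ}

/-- Generic matrix with support `M`. -/
noncomputable def polyMat (F : Type) [Field F] (M : Fin k → Fin n → Bool) :
    Matrix (Fin k) (Fin n) (MvPolynomial (Fin k × Fin n) F) :=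
  fun i j => if M i j then MvPolynomial.X (i, j) else 0

/-- If `f` and `e` are injective and range of `f` is inside range of `e`, there is a
permutation `σ` with `e ∘ σ = f`. -/
lemma exists_perm_comp {e f : Fin k → Fin n} (he : Function.Injective e)
    (hf : Function.Injective f) (h : ∀ t, ∃ r, e r = f t) :
    ∃ σ : Equiv.Perm (Fin k), ∀ t, e (σ t) = f t := by
  choose g hg using h
  have hginj : Function.Injective g := fun a b hab => hf (by rw [← hg, ← hg, hab])
  exact ⟨Equiv.ofBijective g (Finite.injective_iff_bijective.mp hginj), fun t => hg t⟩

/-- The number of `k`-subsets of `Fin n` containing a fixed `j`. -/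
lemma card_powersetCard_filter_mem (hk : 1 ≤ k) (j : Fin n) :
    ((Finset.univ.powersetCard k : Finset (Finset (Fin n))).filter (fun S => j ∈ S)).card
      = (n - 1).choose (k - 1) := by
  have : ((Finset.univ.powersetCard k : Finset (Finset (Fin n))).filter (fun S => j ∈ S)).card
      = ((Finset.univ.erase j).powersetCard (k - 1)).card := by
    refine Finset.card_bij' (fun S _ => S.erase j) (fun T _ => insert j T) ?hi ?hj ?li ?ri
    case hi =>
      intro S hS
      simp only [Finset.mem_filter, Finset.mem_powersetCard_univ] at hS
      rw [Finset.mem_powersetCard]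
      exact ⟨Finset.erase_subset_erase j (Finset.subset_univ S),
        by rw [Finset.card_erase_of_mem hS.2, hS.1]⟩
    case hj =>
      intro T hT
      rw [Finset.mem_powersetCard] at hT
      have hjT : j ∉ T := fun hj => (Finset.notMem_erase j _) (hT.1 hj)
      simp only [Finset.mem_filter, Finset.mem_powersetCard_univ]
      constructor
      · rw [Finset.card_insert_of_notMem hjT, hT.2]
        omega
      · exact Finset.mem_insert_self j T
    case li =>
      intro S hS
      simp only [Finset.mem_filter] at hS
      exact Finset.insert_erase hS.2
    case ri =>
      intro T hT
      rw [Finset.mem_powersetCard] at hT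
      have hjT : j ∉ T := fun hj => (Finset.notMem_erase j _) (hT.1 hj)
      exact Finset.erase_insert hjT
  rw [this, Finset.card_powersetCard, Finset.card_erase_of_mem (Finset.mem_univ j),
    Finset.card_univ, Fintype.card_fin]

end Aux

theorem stmt_10 (k n : ℕ) (hk : 1 ≤ k) (hkn : k ≤ n)
    (F : Type) [Field F] [Fintype F]
    (hq : (n - 1).choose (k - 1) < Fintype.card F)
    (M : Fin k → Fin n → Bool)
    (hrow : ∀ i, (rowSupp M i).card = n - k + 1)
    (hP3 : P3 M) :
    ∃ G : Matrix (Fin k) (Fin n) F,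
      (∀ i j, G i j ≠ 0 ↔ M i j = true) ∧
      (∀ s : Fin k → Fin n, Function.Injective s → (G.submatrix id s).det ≠ 0) := by
  classical
  set N := polyMat F M with hN
  -- enumeration of a k-subset
  set 𝒮 := (Finset.univ.powersetCard k : Finset (Finset (Fin n))) with h𝒮
  have hcard : ∀ S ∈ 𝒮, S.card = k := fun S hS => Finset.mem_powersetCard_univ.mp hS
  set emb : {S // S ∈ 𝒮} → Fin k → Fin n :=
    fun S t => ((S.1.orderIsoOfFin (hcard S.1 S.2)) t : Fin n) with hemb
  have hembInj : ∀ S, Function.Injective (emb S) := by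
    intro S a b hab
    exact (S.1.orderIsoOfFin (hcard S.1 S.2)).injective (Subtype.ext hab)
  have hembMem : ∀ S t, emb S t ∈ S.1 := fun S t => (S.1.orderIsoOfFin (hcard S.1 S.2) t).2
  have hembSurj : ∀ S j, j ∈ S.1 → ∃ t, emb S t = j := by
    intro S j hj
    exact ⟨(S.1.orderIsoOfFin (hcard S.1 S.2)).symm ⟨j, hj⟩,
      congrArg Subtype.val ((S.1.orderIsoOfFin (hcard S.1 S.2)).apply_symm_apply ⟨j, hj⟩)⟩
  -- Hall matchings
  have hall : ∀ S : {S // S ∈ 𝒮}, ∃ f : Fin k → Fin n,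
      Function.Injective f ∧ ∀ i, M i (f i) = true ∧ f i ∈ S.1 := by
    intro S
    have key : ∀ I : Finset (Fin k), I.card ≤ (I.biUnion (fun i => rowSupp M i ∩ S.1)).card := by
      intro I
      rcases I.eq_empty_or_nonempty with rfl | hI
      · simp
      have hbu : I.biUnion (fun i => rowSupp M i ∩ S.1) = (I.biUnion (rowSupp M)) ∩ S.1 := by
        ext x
        simp only [Finset.mem_biUnion, Finset.mem_inter]
        tauto
      rw [hbu]
      set A := I.biUnion (rowSupp M)
      have h1 : n - k + I.card ≤ A.card := hP3 I hI
      have h2 : (A ∪ S.1).card + (A ∩ S.1).card = A.card + S.1.card :=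
        Finset.card_union_add_card_inter A S.1
      have h3 : (A ∪ S.1).card ≤ n := by
        have := Finset.card_le_univ (A ∪ S.1)
        simpa using this
      have h4 : S.1.card = k := hcard S.1 S.2
      have h5 : I.card ≤ k := by
        have := Finset.card_le_univ I
        simpa using this
      omega
    obtain ⟨f, hfinj, hf⟩ :=
      (Finset.all_card_le_biUnion_card_iff_exists_injective
        (fun i => rowSupp M i ∩ S.1)).mp key
    refine ⟨f, hfinj, fun i => ?_⟩
    have := hf i
    rw [Finset.mem_inter] at this
    refine ⟨?_, this.2⟩
    have := this.1
    simpa [rowSupp] using this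
  -- each minor of the generic matrix is a nonzero polynomial
  have det_ne : ∀ S : {S // S ∈ 𝒮}, (N.submatrix id (emb S)).det ≠ 0 := by
    intro S
    obtain ⟨f, hfinj, hf⟩ := hall S
    obtain ⟨σ, hσ⟩ := exists_perm_comp (hembInj S) hfinj
      (fun t => hembSurj S (f t) (hf t).2)
    intro hdet
    -- evaluate at the indicator of the matching
    set φ : Fin k × Fin n → F := fun v => if f v.1 = v.2 then 1 else 0 with hφ
    have hmap : (RingHom.mapMatrix (MvPolynomial.eval φ)) (N.submatrix id (emb S))
        = (σ.permMatrix F) := by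
      ext t r
      simp only [RingHom.mapMatrix_apply, Matrix.map_apply, Matrix.submatrix_apply, id_eq,
        Equiv.Perm.permMatrix, PEquiv.toMatrix_apply, Equiv.toPEquiv_apply, Option.mem_def,
        Option.some.injEq, hN, polyMat]
      by_cases hr : r = σ t
      · subst hr
        rw [hσ t]
        simp [hf t, hφ, (hf t).1]
      · have hne : emb S r ≠ f t := by
          intro hcontra
          exact hr (hembInj S (by rw [hσ t, hcontra]))
        have : (if σ t = r then (1:F) else 0) = 0 := by
          rw [if_neg (fun h => hr h.symm)]
        rw [this]
        by_cases hM : M t (emb S r) = true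
        · simp only [hM, if_true, eval_X]
          rw [hφ]
          simp only
          rw [if_neg (fun h => hne h.symm)]
        · simp [hM]
    have : (MvPolynomial.eval φ) (N.submatrix id (emb S)).det = 0 := by rw [hdet]; simp
    rw [RingHom.map_det, hmap, Matrix.det_permutation] at this
    rcases Int.units_eq_one_or σ.sign with h | h <;> rw [h] at this <;> simp at this
  -- the big product
  set P : MvPolynomial (Fin k × Fin n) F :=
    ∏ S ∈ 𝒮.attach, (N.submatrix id (emb S)).det with hP
  have hPne : P ≠ 0 := Finset.prod_ne_zero_iff.mpr (fun S _ => det_ne S)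
  -- degree bound
  have hdegFactor : ∀ (S : {S // S ∈ 𝒮}) (i : Fin k) (j : Fin n),
      MvPolynomial.degreeOf (i, j) (N.submatrix id (emb S)).det
        ≤ if j ∈ S.1 then 1 else 0 := by
    intro S i j
    rw [Matrix.det_apply]
    refine le_trans (MvPolynomial.degreeOf_sum_le _ _ _) ?_
    rw [Finset.sup_le_iff]
    intro σ _
    have hsle : MvPolynomial.degreeOf (i, j)
        (Equiv.Perm.sign σ • ∏ t : Fin k, (N.submatrix id (emb S)) (σ t) t)
        ≤ MvPolynomial.degreeOf (i, j) (∏ t : Fin k, (N.submatrix id (emb S)) (σ t) t) := by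
      rcases Int.units_eq_one_or σ.sign with h | h
      · rw [h, one_smul]
      · rw [h, Units.smul_def, Units.val_neg, Units.val_one, neg_one_zsmul,
          MvPolynomial.degreeOf_neg]
    refine le_trans hsle ?_
    refine le_trans (MvPolynomial.degreeOf_prod_le _ _ _) ?_
    have hterm : ∀ t : Fin k,
        MvPolynomial.degreeOf (i, j) ((N.submatrix id (emb S)) (σ t) t)
          ≤ if emb S t = j then 1 else 0 := by
      intro t
      simp only [Matrix.submatrix_apply, id_eq, hN, polyMat]
      by_cases hM : M (σ t) (emb S t) = true
      · rw [if_pos hM, MvPolynomial.degreeOf_X]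
        by_cases hij : (i, j) = (σ t, emb S t)
        · rw [if_pos hij]
          have : emb S t = j := by
            have := congrArg Prod.snd hij
            simpa using this.symm
          rw [if_pos this]
        · rw [if_neg hij]
          split <;> omega
      · rw [if_neg hM, MvPolynomial.degreeOf_zero]
        split <;> omega
    refine le_trans (Finset.sum_le_sum (fun t _ => hterm t)) ?_
    have hsum : (∑ t : Fin k, if emb S t = j then (1:ℕ) else 0)
        = (Finset.univ.filter (fun t => emb S t = j)).card := by
      rw [Finset.card_filter]
    rw [hsum]
    by_cases hj : j ∈ S.1
    · rw [if_pos hj]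
      refine Finset.card_le_one.mpr ?_
      intro a ha b hb
      rw [Finset.mem_filter] at ha hb
      exact hembInj S (ha.2.trans hb.2.symm)
    · rw [if_neg hj]
      have : Finset.univ.filter (fun t => emb S t = j) = ∅ := by
        rw [Finset.filter_eq_empty_iff]
        intro t _ ht
        exact hj (ht ▸ hembMem S t)
      rw [this, Finset.card_empty]
  -- degree bound on the big product
  have hdegP : ∀ v : Fin k × Fin n, MvPolynomial.degreeOf v P ≤ (n - 1).choose (k - 1) := by
    rintro ⟨i, j⟩
    rw [hP]
    refine le_trans (MvPolynomial.degreeOf_prod_le _ _ _) ?_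
    refine le_trans (Finset.sum_le_sum (fun S _ => hdegFactor S i j)) ?_
    rw [Finset.sum_attach 𝒮 (fun S => if j ∈ S then 1 else 0)]
    have : (∑ S ∈ 𝒮, if j ∈ S then (1:ℕ) else 0) = (𝒮.filter (fun S => j ∈ S)).card := by
      rw [Finset.card_filter]
    rw [this, h𝒮, card_powersetCard_filter_mem hk j]
  -- find a good evaluation point
  have hex : ∃ φ : Fin k × Fin n → F, MvPolynomial.eval φ P ≠ 0 := by
    by_contra h
    push_neg at h
    apply hPne
    refine MvPolynomial.eq_zero_of_eval_eq_zero _ F P h ?_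
    rw [MvPolynomial.mem_restrictDegree]
    intro s hs v
    exact MvPolynomial.degreeOf_le_iff.mp
      (le_trans (hdegP v) (by omega : (n - 1).choose (k - 1) ≤ Fintype.card F - 1)) s hs
  obtain ⟨φ, hφP⟩ := hex
  set G : Matrix (Fin k) (Fin n) F := fun i j => if M i j then φ (i, j) else 0 with hG
  have hGmap : ∀ e : Fin k → Fin n,
      (RingHom.mapMatrix (MvPolynomial.eval φ)) (N.submatrix id e) = G.submatrix id e := by
    intro e
    ext i t
    simp only [RingHom.mapMatrix_apply, Matrix.map_apply, Matrix.submatrix_apply, id_eq,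
      hN, polyMat, hG]
    split <;> rename_i hMe <;> show _ = (if M i (e t) = true then φ (i, e t) else 0) <;> simp [hMe]
  have hminor : ∀ S : {S // S ∈ 𝒮}, (G.submatrix id (emb S)).det ≠ 0 := by
    intro S hz
    apply hφP
    rw [hP, map_prod]
    refine Finset.prod_eq_zero (Finset.mem_attach _ S) ?_
    rw [RingHom.map_det, hGmap, hz]
  -- all k x k minors of G are invertible
  have hdetAll : ∀ s : Fin k → Fin n, Function.Injective s → (G.submatrix id s).det ≠ 0 := by
    intro s hs
    set S : Finset (Fin n) := Finset.univ.image s with hS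
    have hSmem : S ∈ 𝒮 := Finset.mem_powersetCard_univ.mpr
      (by rw [hS, Finset.card_image_of_injective _ hs, Finset.card_univ, Fintype.card_fin])
    set S' : {S // S ∈ 𝒮} := ⟨S, hSmem⟩ with hS'
    obtain ⟨σ, hσ⟩ := exists_perm_comp (hembInj S') hs
      (fun t => hembSurj S' (s t) (Finset.mem_image_of_mem s (Finset.mem_univ t)))
    have heq : G.submatrix id s = (G.submatrix id (emb S')).submatrix id σ := by
      ext i t
      simp only [Matrix.submatrix_apply, id_eq, hσ t]
    rw [heq, Matrix.det_permute']
    refine mul_ne_zero ?_ (hminor S')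
    rcases Int.units_eq_one_or σ.sign with h | h <;> rw [h] <;> simp
  refine ⟨G, ?_, hdetAll⟩
  intro i j
  constructor
  · intro hne
    by_contra hM
    apply hne
    rw [hG]
    simp only
    rw [if_neg hM]
  · intro hM h0
    -- MDS minimum-distance argument: an entry on the support cannot vanish
    have hsub : Finset.univ.filter (fun c => ¬ G i c = 0) ⊆ (rowSupp M i).erase j := by
      intro c hc
      rw [Finset.mem_filter] at hc
      rw [Finset.mem_erase]
      constructor
      · intro hcj
        exact hc.2 (hcj ▸ h0)
      · rw [rowSupp, Finset.mem_filter]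
        refine ⟨Finset.mem_univ c, ?_⟩
        by_contra hMc
        apply hc.2
        rw [hG]
        simp only
        rw [if_neg hMc]
    have hjmem : j ∈ rowSupp M i := by
      rw [rowSupp, Finset.mem_filter]
      exact ⟨Finset.mem_univ j, hM⟩
    have hcard1 : (Finset.univ.filter (fun c => ¬ G i c = 0)).card ≤ n - k := by
      refine le_trans (Finset.card_le_card hsub) ?_
      rw [Finset.card_erase_of_mem hjmem, hrow i]
      omega
    have hcard2 : k ≤ (Finset.univ.filter (fun c => G i c = 0)).card := by
      have htot := Finset.card_filter_add_card_filter_not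
        (s := (Finset.univ : Finset (Fin n))) (p := fun c => G i c = 0)
      rw [Finset.card_univ, Fintype.card_fin] at htot
      omega
    obtain ⟨T, hTsub, hTcard⟩ := Finset.exists_subset_card_eq hcard2
    set e : Fin k → Fin n := fun t => (T.orderIsoOfFin hTcard t : Fin n) with he
    have heinj : Function.Injective e := fun a b hab =>
      (T.orderIsoOfFin hTcard).injective (Subtype.ext hab)
    apply hdetAll e heinj
    apply Matrix.det_eq_zero_of_row_eq_zero i
    intro t
    have hmemT : e t ∈ T := (T.orderIsoOfFin hTcard t).2
    have := hTsub hmemT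
    rw [Finset.mem_filter] at this
    exact this.2
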